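/- Let S be a finite set, let P be an irreducible stochastic matrix on S (all entries nonnegative, every row summing to 1), and let π be a probability distribution on S with π_s > 0 for all s, such that P is in detailed balance with π (π_s P_{ss'} = π_{s'} P_{s's} for all s,s' ∈ S). Let X be a nonempty subset of S, and for s,s' ∈ X define the 'watched-chain' matrix (P̄)_{ss'} := P_{ss'} + Σ_{n=0}^∞ Σ_{s_0,s_1,…,s_n ∈ S∖X} P_{s s_0} (Π_{l=1}^n P_{s_{l-1} s_l}) P_{s_n s'}. Then every such series converges, P̄ is a stochastic matrix on X, and P̄ is in detailed balance with the normalized restriction π̄_s = π_s / Σ_{t∈X} π_t, i.e. π̄_s (P̄)_{ss'} = π̄_{s'} (P̄)_{s's} for all s,s' ∈ X. -/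

import Mathlib

open Finset

/-- The sum over all `(n+1)`-tuples of states lying in `Y` of the product of transition
probabilities along the corresponding path `s → s₀ → s₁ → ⋯ → sₙ → s'`. -/
noncomputable def tupSum {S : Type*} [Fintype S] [DecidableEq S]
    (P : Matrix S S ℝ) (Y : Finset S) (s s' : S) (n : ℕ) : ℝ :=
  ∑ f : Fin (n + 1) → S,
    if ∀ i, f i ∈ Y then
      P s (f 0) * (∏ i : Fin n, P (f i.castSucc) (f i.succ)) * P (f (Fin.last n)) s'
    else 0

/-- The watched-chain ("observed only on `X`") transition kernel
`P̄ s s' = P s s' + ∑_{n=0}^∞ ∑_{s₀,…,sₙ ∈ S∖X} P s s₀ (∏ P s_{l-1} s_l) P sₙ s'`. -/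
noncomputable def watched {S : Type*} [Fintype S] [DecidableEq S]
    (P : Matrix S S ℝ) (X : Finset S) (s s' : S) : ℝ :=
  P s s' + ∑' n : ℕ, tupSum P Xᶜ s s' n

section Aux
variable {S : Type*} [Fintype S] [DecidableEq S]

noncomputable def Mk (P : Matrix S S ℝ) (Y : Finset S) : Matrix S S ℝ :=
  Matrix.of fun a b => if b ∈ Y then P a b else 0

lemma tupSum_zero (P : Matrix S S ℝ) (Y : Finset S) (s s' : S) :
    tupSum P Y s s' 0 = ∑ y, if y ∈ Y then P s y * P y s' else 0 := by
  unfold tupSum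
  rw [Fintype.sum_equiv (Equiv.funUnique (Fin 1) S)
    _ (fun y => if y ∈ Y then P s y * P y s' else 0)]
  intro f
  simp [Fin.forall_fin_one, Fin.last, Equiv.funUnique]

lemma tupSum_cons (P : Matrix S S ℝ) (Y : Finset S) (s s' : S) (n : ℕ) :
    tupSum P Y s s' (n + 1) = ∑ y, if y ∈ Y then P s y * tupSum P Y y s' n else 0 := by
  unfold tupSum
  rw [← (Fin.consEquiv (fun _ : Fin (n + 2) => S)).sum_comp]
  rw [Fintype.sum_prod_type]
  refine Finset.sum_congr rfl fun y _ => ?_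
  have hcond : ∀ g : Fin (n+1) → S,
      (∀ i : Fin (n+2), (Fin.cons y g : Fin (n+2) → S) i ∈ Y) ↔ (y ∈ Y ∧ ∀ i, g i ∈ Y) := fun g => by
    rw [Fin.forall_fin_succ]; simp
  have hprod : ∀ g : Fin (n+1) → S,
      (∏ i : Fin (n+1), P ((Fin.cons y g : Fin (n+2) → S) i.castSucc) ((Fin.cons y g : Fin (n+2) → S) i.succ))
        = P y (g 0) * ∏ i : Fin n, P (g i.castSucc) (g i.succ) := by
    intro g
    rw [Fin.prod_univ_succ]
    congr 1
  have hlast : ∀ g : Fin (n+1) → S,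
      (Fin.cons y g : Fin (n+2) → S) (Fin.last (n+1)) = g (Fin.last n) := fun g => by
    rw [← Fin.succ_last, Fin.cons_succ]
  simp only [Fin.consEquiv_apply, hcond, Fin.cons_zero, hprod, hlast, ite_and]
  split_ifs with hy
  · rw [mul_sum]
    refine Finset.sum_congr rfl fun g _ => ?_
    split_ifs with hg
    · ring
    · ring
  · simp

lemma tupSum_rep (P : Matrix S S ℝ) (Y : Finset S) (s s' : S) (n : ℕ) :
    tupSum P Y s s' n = ∑ y, (Mk P Y ^ (n + 1)) s y * P y s' := by
  induction n generalizing s with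
  | zero =>
    rw [tupSum_zero]
    simp [Mk, ite_mul]
  | succ n ih =>
    rw [tupSum_cons]
    calc ∑ y, (if y ∈ Y then P s y * tupSum P Y y s' n else 0)
        = ∑ y, Mk P Y s y * tupSum P Y y s' n := by
          refine Finset.sum_congr rfl fun y _ => ?_
          simp [Mk, ite_mul]
      _ = ∑ y, Mk P Y s y * ∑ z, (Mk P Y ^ (n + 1)) y z * P z s' := by simp_rw [ih]
      _ = ∑ z, (∑ y, Mk P Y s y * (Mk P Y ^ (n + 1)) y z) * P z s' := by
          simp_rw [mul_sum]
          rw [Finset.sum_comm]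
          simp_rw [sum_mul, mul_assoc]
      _ = ∑ z, (Mk P Y ^ (n + 2)) s z * P z s' := by
          rw [show (Mk P Y) ^ (n + 2) = Mk P Y * Mk P Y ^ (n + 1) from pow_succ' _ _]
          simp_rw [Matrix.mul_apply]

lemma tupSum_snoc (P : Matrix S S ℝ) (Y : Finset S) (s s' : S) (n : ℕ) :
    tupSum P Y s s' (n + 1) = ∑ y, if y ∈ Y then tupSum P Y s y n * P y s' else 0 := by
  have key : ∀ y, (if y ∈ Y then tupSum P Y s y n * P y s' else 0)
      = (∑ z, (Mk P Y ^ (n + 1)) s z * Mk P Y z y) * P y s' := by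
    intro y
    by_cases hy : y ∈ Y
    · simp only [hy, if_true]
      rw [tupSum_rep]
      congr 1
      refine Finset.sum_congr rfl fun z _ => ?_
      simp [Mk, hy]
    · simp [hy, Mk]
  simp_rw [key]
  rw [tupSum_rep]
  rw [show (Mk P Y) ^ (n + 2) = Mk P Y ^ (n + 1) * Mk P Y from pow_succ _ _]
  simp_rw [Matrix.mul_apply]

end Aux

theorem watched_chain_stochastic_and_detailed_balance
    {S : Type*} [Fintype S] [DecidableEq S]
    (P : Matrix S S ℝ) (pd : S → ℝ)
    (hPnn : ∀ s s', 0 ≤ P s s')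
    (hProw : ∀ s, ∑ s', P s s' = 1)
    (hirr : ∀ s s', ∃ n : ℕ, 1 ≤ n ∧ 0 < (P ^ n) s s')
    (hpos : ∀ s, 0 < pd s)
    (hsum : ∑ s, pd s = 1)
    (hdb : ∀ s s', pd s * P s s' = pd s' * P s' s)
    (X : Finset S) (hX : X.Nonempty) :
    (∀ s ∈ X, ∀ s' ∈ X, Summable fun n => tupSum P Xᶜ s s' n) ∧
    (∀ s ∈ X, ∀ s' ∈ X, 0 ≤ watched P X s s') ∧
    (∀ s ∈ X, ∑ s' ∈ X, watched P X s s' = 1) ∧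
    (∀ s ∈ X, ∀ s' ∈ X,
      (pd s / ∑ t ∈ X, pd t) * watched P X s s' =
        (pd s' / ∑ t ∈ X, pd t) * watched P X s' s) := by
  classical
  set Y := Xᶜ with hYdef
  set M := Mk P Y with hMdef
  have hMapp : ∀ a b, M a b = if b ∈ Y then P a b else 0 := fun a b => rfl
  have hMnn : ∀ a b, 0 ≤ M a b := by
    intro a b; rw [hMapp]; split_ifs <;> [exact hPnn a b; exact le_refl 0]
  have hMle : ∀ a b, M a b ≤ P a b := by
    intro a b; rw [hMapp]; split_ifs <;> [exact le_refl _; exact hPnn a b]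
  have hpownn : ∀ k a b, 0 ≤ (M ^ k) a b := by
    intro k
    induction k with
    | zero => intro a b; rw [pow_zero, Matrix.one_apply]; split_ifs <;> norm_num
    | succ k ih =>
      intro a b
      rw [pow_succ, Matrix.mul_apply]
      exact sum_nonneg fun c _ => mul_nonneg (ih a c) (hMnn c b)
  have hPpownn : ∀ k a b, 0 ≤ (P ^ k) a b := by
    intro k
    induction k with
    | zero => intro a b; rw [pow_zero, Matrix.one_apply]; split_ifs <;> norm_num
    | succ k ih =>
      intro a b
      rw [pow_succ, Matrix.mul_apply]
      exact sum_nonneg fun c _ => mul_nonneg (ih a c) (hPnn c b)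
  have hpowle : ∀ k a b, (M ^ k) a b ≤ (P ^ k) a b := by
    intro k
    induction k with
    | zero => intro a b; rw [pow_zero, pow_zero]
    | succ k ih =>
      intro a b
      rw [pow_succ, pow_succ, Matrix.mul_apply, Matrix.mul_apply]
      exact sum_le_sum fun c _ => mul_le_mul (ih a c) (hMle c b) (hMnn c b) (hPpownn k a c)
  have hProwk : ∀ k a, ∑ b, (P ^ k) a b = 1 := by
    intro k
    induction k with
    | zero => intro a; simp [Matrix.one_apply]
    | succ k ih =>
      intro a
      simp_rw [pow_succ, Matrix.mul_apply]
      rw [Finset.sum_comm]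
      simp_rw [← Finset.mul_sum, hProw, mul_one]
      exact ih a
  have hMX : ∀ k a, ∀ b ∉ Y, (M ^ (k + 1)) a b = 0 := by
    intro k a b hb
    rw [pow_succ, Matrix.mul_apply]
    refine Finset.sum_eq_zero fun c _ => ?_
    rw [hMapp, if_neg hb, mul_zero]
  set r : ℕ → S → ℝ := fun k s => ∑ y, (M ^ k) s y with hrdef
  have hr0 : ∀ s, r 0 s = 1 := by intro s; simp [hrdef, Matrix.one_apply]
  have hrnn : ∀ k s, 0 ≤ r k s := fun k s => sum_nonneg fun y _ => hpownn k s y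
  have hMrow_le : ∀ s, ∑ b, M s b ≤ 1 := by
    intro s
    calc ∑ b, M s b ≤ ∑ b, P s b := sum_le_sum fun b _ => hMle s b
      _ = 1 := hProw s
  have hrsucc : ∀ k s, r (k + 1) s = ∑ z, (M ^ k) s z * (∑ b, M z b) := by
    intro k s
    simp only [hrdef]
    simp_rw [pow_succ, Matrix.mul_apply]
    rw [Finset.sum_comm]
    simp_rw [← Finset.mul_sum]
  have hr_mono : ∀ k s, r (k + 1) s ≤ r k s := by
    intro k s
    rw [hrsucc]
    calc ∑ z, (M ^ k) s z * (∑ b, M z b)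
        ≤ ∑ z, (M ^ k) s z * 1 :=
          sum_le_sum fun z _ => mul_le_mul_of_nonneg_left (hMrow_le z) (hpownn k s z)
      _ = r k s := by simp [hrdef]
  have hr_anti : ∀ s, Antitone fun k => r k s := fun s =>
    antitone_nat_of_succ_le fun k => hr_mono k s
  have hr_le_one : ∀ k s, r k s ≤ 1 := fun k s =>
    le_of_le_of_eq (hr_anti s (Nat.zero_le k)) (hr0 s)
  obtain ⟨x₀, hx₀⟩ := hX
  have hx₀Y : x₀ ∉ Y := by simp [hYdef, hx₀]
  have hNy : ∀ y : S, ∃ n, 1 ≤ n ∧ r n y < 1 := by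
    intro y
    obtain ⟨n, hn1, hnpos⟩ := hirr y x₀
    refine ⟨n, hn1, ?_⟩
    obtain ⟨m, rfl⟩ := Nat.exists_eq_add_of_le hn1
    have h0 : (M ^ (1 + m)) y x₀ = 0 := by
      rw [add_comm]; exact hMX m y x₀ hx₀Y
    have hM' : r (1 + m) y = ∑ z ∈ univ.erase x₀, (M ^ (1 + m)) y z := by
      simp only [hrdef]
      rw [← Finset.sum_erase_add univ _ (mem_univ x₀), h0, add_zero]
    have hP' : ∑ z ∈ univ.erase x₀, (P ^ (1 + m)) y z = 1 - (P ^ (1 + m)) y x₀ := by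
      have := Finset.sum_erase_add univ (fun z => (P ^ (1 + m)) y z) (mem_univ x₀)
      rw [hProwk (1 + m) y] at this
      linarith
    have hle : r (1 + m) y ≤ 1 - (P ^ (1 + m)) y x₀ := by
      rw [hM', ← hP']
      exact sum_le_sum fun z _ => hpowle (1 + m) y z
    linarith
  choose nn hnn1 hnnlt using hNy
  set N := (univ : Finset S).sup nn with hNdef
  have hN1 : 1 ≤ N := le_trans (hnn1 x₀) (Finset.le_sup (mem_univ x₀))
  have hrN : ∀ y, r N y < 1 := fun y =>
    lt_of_le_of_lt (hr_anti y (Finset.le_sup (mem_univ y))) (hnnlt y)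
  obtain ⟨z₀, -, hz₀⟩ := Finset.exists_max_image univ (fun y => r N y) ⟨x₀, mem_univ x₀⟩
  set θ := r N z₀ with hθdef
  have hθ1 : θ < 1 := hrN z₀
  have hθ0 : 0 ≤ θ := hrnn N z₀
  have hθ : ∀ y, r N y ≤ θ := fun y => hz₀ y (mem_univ y)
  have hradd : ∀ a s, r (a + N) s = ∑ z, (M ^ a) s z * r N z := by
    intro a s
    simp only [hrdef]
    simp_rw [pow_add, Matrix.mul_apply]
    rw [Finset.sum_comm]
    simp_rw [← Finset.mul_sum]
  have hsub : ∀ a s, r (a + N) s ≤ θ * r a s := by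
    intro a s
    rw [hradd]
    calc ∑ z, (M ^ a) s z * r N z
        ≤ ∑ z, (M ^ a) s z * θ :=
          sum_le_sum fun z _ => mul_le_mul_of_nonneg_left (hθ z) (hpownn a s z)
      _ = θ * r a s := by rw [← Finset.sum_mul, mul_comm]
  have hgeo : ∀ k s, r (k * N) s ≤ θ ^ k := by
    intro k
    induction k with
    | zero => intro s; simp [hr0]
    | succ k ih =>
      intro s
      have h1 : (k + 1) * N = k * N + N := by ring
      rw [h1]
      calc r (k * N + N) s ≤ θ * r (k * N) s := hsub _ s
        _ ≤ θ * θ ^ k := mul_le_mul_of_nonneg_left (ih s) hθ0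
        _ = θ ^ (k + 1) := (pow_succ' θ k).symm
  have hrtend : ∀ s, Filter.Tendsto (fun n => r n s) Filter.atTop (nhds 0) := by
    intro s
    have hub : ∀ n, r n s ≤ θ ^ (n / N) := by
      intro n
      calc r n s ≤ r (n / N * N) s := hr_anti s (Nat.div_mul_le_self n N)
        _ ≤ θ ^ (n / N) := hgeo _ s
    have hdiv : Filter.Tendsto (fun n : ℕ => n / N) Filter.atTop Filter.atTop := by
      apply Filter.tendsto_atTop_atTop.2
      intro b
      exact ⟨b * N, fun a ha => (Nat.le_div_iff_mul_le (by omega)).2 ha⟩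
    have := (tendsto_pow_atTop_nhds_zero_of_lt_one hθ0 hθ1).comp hdiv
    exact squeeze_zero (fun n => hrnn n s) hub this
  -- row sums of tupSum
  have hrowsum : ∀ s n, ∑ s' ∈ X, tupSum P Y s s' n = r (n + 1) s - r (n + 2) s := by
    intro s n
    calc ∑ s' ∈ X, tupSum P Y s s' n
        = ∑ s' ∈ X, ∑ y, (M ^ (n + 1)) s y * P y s' :=
          sum_congr rfl fun s' _ => tupSum_rep P Y s s' n
      _ = ∑ y, (M ^ (n + 1)) s y * ∑ s' ∈ X, P y s' := by
          rw [Finset.sum_comm]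
          simp_rw [← mul_sum]
      _ = ∑ y, (M ^ (n + 1)) s y * (1 - ∑ b, M y b) := by
          refine sum_congr rfl fun y _ => ?_
          congr 1
          have h1 : ∑ s' ∈ X, P y s' + ∑ s' ∈ Xᶜ, P y s' = 1 := by
            rw [Finset.sum_add_sum_compl]; exact hProw y
          have h2 : ∑ b, M y b = ∑ s' ∈ Xᶜ, P y s' := by
            simp_rw [hMapp]
            rw [Finset.sum_ite_mem, Finset.univ_inter]
          linarith
      _ = r (n + 1) s - r (n + 2) s := by
          simp_rw [mul_sub, mul_one]
          rw [Finset.sum_sub_distrib]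
          congr 1
          exact (hrsucc (n + 1) s).symm
  have htel : ∀ s N', ∑ n ∈ range N', (r (n + 1) s - r (n + 2) s) = r 1 s - r (N' + 1) s := by
    intro s N'
    exact Finset.sum_range_sub' (fun k => r (k + 1) s) N'
  have htnn : ∀ s s' n, 0 ≤ tupSum P Y s s' n := by
    intro s s' n
    rw [tupSum_rep]
    exact sum_nonneg fun y _ => mul_nonneg (hpownn _ _ _) (hPnn y s')
  have hsummable : ∀ s, ∀ s' ∈ X, Summable fun n => tupSum P Y s s' n := by
    intro s s' hs'
    apply summable_of_sum_range_le (c := 1) (fun n => htnn s s' n)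
    intro n
    calc ∑ i ∈ range n, tupSum P Y s s' i
        ≤ ∑ i ∈ range n, ∑ t ∈ X, tupSum P Y s t i :=
          sum_le_sum fun i _ => Finset.single_le_sum (fun t _ => htnn s t i) hs'
      _ = ∑ i ∈ range n, (r (i + 1) s - r (i + 2) s) := sum_congr rfl fun i _ => hrowsum s i
      _ = r 1 s - r (n + 1) s := htel s n
      _ ≤ 1 := by
          have h1 := hrnn (n + 1) s
          have h2 := hr_le_one 1 s
          linarith
  have hwnn : ∀ s s', 0 ≤ watched P X s s' := by
    intro s s'
    unfold watched
    have := tsum_nonneg (L := SummationFilter.unconditional ℕ) (fun n => htnn s s' n)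
    have := hPnn s s'
    linarith
  have hwrow : ∀ s ∈ X, ∑ s' ∈ X, watched P X s s' = 1 := by
    intro s hs
    unfold watched
    rw [Finset.sum_add_distrib]
    have h1 : ∑ s' ∈ X, P s s' = 1 - r 1 s := by
      have ha : ∑ s' ∈ X, P s s' + ∑ s' ∈ Xᶜ, P s s' = 1 := by
        rw [Finset.sum_add_sum_compl]; exact hProw s
      have hb : r 1 s = ∑ s' ∈ Xᶜ, P s s' := by
        simp only [hrdef, pow_one]
        simp_rw [hMapp]
        rw [Finset.sum_ite_mem, Finset.univ_inter]
      linarith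
    have h2 : ∑ s' ∈ X, ∑' n, tupSum P Y s s' n = r 1 s := by
      rw [← Summable.tsum_finsetSum (fun i hi => hsummable s i hi)]
      rw [tsum_congr (fun n => hrowsum s n)]
      have hsg : Summable fun n => r (n + 1) s - r (n + 2) s := by
        have := summable_sum (s := X) (f := fun s' n => tupSum P Y s s' n)
          (fun i hi => hsummable s i hi)
        refine this.congr fun n => ?_
        exact hrowsum s n
      have hts : Filter.Tendsto (fun N' => r 1 s - r (N' + 1) s) Filter.atTop (nhds (r 1 s)) := by
        have h3 : Filter.Tendsto (fun N' : ℕ => r (N' + 1) s) Filter.atTop (nhds 0) :=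
          (hrtend s).comp (Filter.tendsto_add_atTop_nat 1)
        have := Filter.Tendsto.sub (tendsto_const_nhds (x := r 1 s)) h3
        simpa using this
      have hhs : HasSum (fun n => r (n + 1) s - r (n + 2) s) (r 1 s) := by
        rw [hsg.hasSum_iff_tendsto_nat]
        refine hts.congr fun N' => ?_
        exact (htel s N').symm
      exact hhs.tsum_eq
    rw [h1, h2]
    ring
  have hdbn : ∀ n (s s' : S), pd s * tupSum P Y s s' n = pd s' * tupSum P Y s' s n := by
    intro n
    induction n with
    | zero =>
      intro s s'
      rw [tupSum_zero, tupSum_zero, mul_sum, mul_sum]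
      refine sum_congr rfl fun y _ => ?_
      by_cases hy : y ∈ Y
      · simp only [hy, if_true]
        calc pd s * (P s y * P y s') = (pd s * P s y) * P y s' := by ring
          _ = (pd y * P y s) * P y s' := by rw [hdb]
          _ = (pd y * P y s') * P y s := by ring
          _ = (pd s' * P s' y) * P y s := by rw [hdb]
          _ = pd s' * (P s' y * P y s) := by ring
      · simp [hy]
    | succ n ih =>
      intro s s'
      rw [tupSum_cons P Y s s' n, tupSum_snoc P Y s' s n, mul_sum, mul_sum]
      refine sum_congr rfl fun y _ => ?_
      by_cases hy : y ∈ Y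
      · simp only [hy, if_true]
        calc pd s * (P s y * tupSum P Y y s' n)
            = (pd s * P s y) * tupSum P Y y s' n := by ring
          _ = (pd y * P y s) * tupSum P Y y s' n := by rw [hdb]
          _ = (pd y * tupSum P Y y s' n) * P y s := by ring
          _ = (pd s' * tupSum P Y s' y n) * P y s := by rw [ih y s']
          _ = pd s' * (tupSum P Y s' y n * P y s) := by ring
      · simp [hy]
  have hwdb : ∀ s s', pd s * watched P X s s' = pd s' * watched P X s' s := by
    intro s s'
    unfold watched
    rw [mul_add, mul_add, hdb s s', ← tsum_mul_left, ← tsum_mul_left]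
    congr 1
    exact tsum_congr fun n => hdbn n s s'
  refine ⟨fun s _ s' hs' => hsummable s s' hs', fun s _ s' _ => hwnn s s', hwrow, ?_⟩
  intro s _ s' _
  rw [div_mul_eq_mul_div, div_mul_eq_mul_div, hwdb s s']
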